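/- arXiv:1506.04779 — 5 statements merged into one kernel-verified Lean document; each statement's English description precedes it below -/
import Mathlib

section
/- Let D be a normalized dictionary in a Hilbert space H satisfying RIP(2n) with constant δ_{2n} < 1. Then the set Σ_n of all linear combinations of at most n dictionary elements is closed in H. -/
open scoped RealInnerProductSpace BigOperators

/-- The synthesis operator of a dictionary: `Φ c = ∑ γ c_γ φ_γ`. -/
noncomputable def dictSum {Γ H : Type*} [NormedAddCommGroup H] [InnerProductSpace ℝ H]
    (φ : Γ → H) (c : Γ →₀ ℝ) : H :=
  c.sum fun γ a => a • φ γ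

/-- The squared ℓ² norm of a finitely supported sequence. -/
noncomputable def l2normSq {Γ : Type*} (c : Γ →₀ ℝ) : ℝ :=
  ∑ γ ∈ c.support, (c γ) ^ 2

/-- The restricted isometry property of order `m` with constant `δ`. -/
def RIP {Γ H : Type*} [NormedAddCommGroup H] [InnerProductSpace ℝ H]
    (φ : Γ → H) (m : ℕ) (δ : ℝ) : Prop :=
  ∀ c : Γ →₀ ℝ, c.support.card ≤ m →
    (1 - δ) * l2normSq c ≤ ‖dictSum φ c‖ ^ 2 ∧
    ‖dictSum φ c‖ ^ 2 ≤ (1 + δ) * l2normSq c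

/-- The set `Σ_n` of `n`-term linear combinations from the dictionary. -/
def SigmaN {Γ H : Type*} [NormedAddCommGroup H] [InnerProductSpace ℝ H]
    (φ : Γ → H) (n : ℕ) : Set H :=
  {g | ∃ c : Γ →₀ ℝ, c.support.card ≤ n ∧ dictSum φ c = g}

private lemma dictSum_sub {Γ H : Type*} [NormedAddCommGroup H] [InnerProductSpace ℝ H]
    (φ : Γ → H) (c d : Γ →₀ ℝ) : dictSum φ (c - d) = dictSum φ c - dictSum φ d :=
  map_sub (Finsupp.linearCombination ℝ φ) c d

private lemma l2_nonneg {Γ : Type*} (c : Γ →₀ ℝ) : 0 ≤ l2normSq c :=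
  Finset.sum_nonneg fun _ _ => sq_nonneg _

private lemma l2_eq_sum {Γ : Type*} (c : Γ →₀ ℝ) (s : Finset Γ) (h : c.support ⊆ s) :
    l2normSq c = ∑ γ ∈ s, (c γ) ^ 2 := by
  refine Finset.sum_subset h fun x _ hx => ?_
  simp [Finsupp.notMem_support_iff.mp hx]

private lemma sum_sq_le_l2 {Γ : Type*} (c : Γ →₀ ℝ) (s : Finset Γ) :
    ∑ γ ∈ s, (c γ) ^ 2 ≤ l2normSq c := by
  classical
  rw [l2_eq_sum c (s ∪ c.support) Finset.subset_union_right]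
  exact Finset.sum_le_sum_of_subset_of_nonneg Finset.subset_union_left
    (fun _ _ _ => sq_nonneg _)

private lemma sq_le_l2 {Γ : Type*} (c : Γ →₀ ℝ) (γ : Γ) : (c γ) ^ 2 ≤ l2normSq c := by
  classical
  simpa using sum_sq_le_l2 c {γ}

/-- If the dictionary satisfies RIP(2n) with constant `δ < 1`, then `Σ_n` is closed. -/
theorem stmt1_SigmaN_closed
    {Γ H : Type*} [Countable Γ] [NormedAddCommGroup H] [InnerProductSpace ℝ H]
    [CompleteSpace H]
    (φ : Γ → H) (hnorm : ∀ γ, ‖φ γ‖ = 1)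
    (n : ℕ) (δ : ℝ) (hδ : δ < 1) (hRIP : RIP φ (2 * n) δ) :
    IsClosed (SigmaN φ n) := by
  classical
  rw [← isSeqClosed_iff_isClosed]
  intro x g hmem hg
  choose c hcard hsum using hmem
  have hpos : 0 < 1 - δ := by linarith
  -- supports of differences are 2n-sparse
  have hsupp : ∀ k j : ℕ, (c k - c j).support.card ≤ 2 * n := by
    intro k j
    calc (c k - c j).support.card ≤ ((c k).support ∪ (c j).support).card :=
          Finset.card_le_card Finsupp.support_sub
      _ ≤ (c k).support.card + (c j).support.card := Finset.card_union_le _ _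
      _ ≤ 2 * n := by have := hcard k; have := hcard j; omega
  have key : ∀ k j : ℕ, (1 - δ) * l2normSq (c k - c j) ≤ ‖x k - x j‖ ^ 2 := by
    intro k j
    have h := (hRIP _ (hsupp k j)).1
    rwa [dictSum_sub, hsum, hsum] at h
  have hcauchy : CauchySeq x := hg.cauchySeq
  -- ℓ² Cauchy
  have hl2 : ∀ ε > (0:ℝ), ∃ N, ∀ k ≥ N, ∀ j ≥ N, l2normSq (c k - c j) ≤ ε := by
    intro ε hε
    obtain ⟨N, hN⟩ := Metric.cauchySeq_iff.mp hcauchy (Real.sqrt ((1 - δ) * ε))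
      (Real.sqrt_pos.mpr (by positivity))
    refine ⟨N, fun k hk j hj => ?_⟩
    have h1 := hN k hk j hj
    rw [dist_eq_norm] at h1
    have h2 : ‖x k - x j‖ ^ 2 < (1 - δ) * ε := by
      have hs : (Real.sqrt ((1 - δ) * ε)) ^ 2 = (1 - δ) * ε :=
        Real.sq_sqrt (by positivity)
      nlinarith [norm_nonneg (x k - x j), Real.sqrt_nonneg ((1 - δ) * ε)]
    nlinarith [key k j]
  -- pointwise convergence
  have hptC : ∀ γ : Γ, ∃ L : ℝ, Filter.Tendsto (fun k => c k γ) Filter.atTop (nhds L) := by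
    intro γ
    refine cauchySeq_tendsto_of_complete ?_
    rw [Metric.cauchySeq_iff]
    intro ε hε
    obtain ⟨N, hN⟩ := hl2 (ε ^ 2 / 2) (by positivity)
    refine ⟨N, fun k hk j hj => ?_⟩
    have h1 : ((c k - c j) γ) ^ 2 ≤ ε ^ 2 / 2 := (sq_le_l2 _ γ).trans (hN k hk j hj)
    rw [Finsupp.sub_apply] at h1
    rw [Real.dist_eq]
    nlinarith [abs_nonneg (c k γ - c j γ), sq_abs (c k γ - c j γ)]
  choose f hf using hptC
  -- any finset where f is nonzero has card ≤ n
  have hfin_bound : ∀ t : Finset Γ, (∀ γ ∈ t, f γ ≠ 0) → t.card ≤ n := by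
    intro t ht
    have hev : ∀ γ : Γ, ∃ N : ℕ, γ ∈ t → ∀ k ≥ N, c k γ ≠ 0 := by
      intro γ
      by_cases hγ : γ ∈ t
      · have h0 := ht γ hγ
        have := (hf γ).eventually (p := fun y => y ≠ 0)
          (IsOpen.eventually_mem isOpen_ne h0)
        rw [Filter.eventually_atTop] at this
        obtain ⟨N, hN⟩ := this
        exact ⟨N, fun _ => hN⟩
      · exact ⟨0, fun h => absurd h hγ⟩
    choose N hN using hev
    set K := t.sup N with hK
    have hsub : t ⊆ (c K).support := by
      intro γ hγ
      rw [Finsupp.mem_support_iff]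
      exact hN γ hγ K (Finset.le_sup hγ)
    exact (Finset.card_le_card hsub).trans (hcard K)
  have hSfin : {γ | f γ ≠ 0}.Finite := by
    by_contra h
    obtain ⟨t, hts, htcard⟩ := (Set.Infinite.exists_subset_card_eq h (n + 1))
    have := hfin_bound t fun γ hγ => hts hγ
    omega
  set cLim : Γ →₀ ℝ := ⟨hSfin.toFinset, f, by intro a; simp⟩ with hcLim
  have hcLimapp : ∀ γ, cLim γ = f γ := fun γ => rfl
  have hcLimcard : cLim.support.card ≤ n :=
    hfin_bound _ fun γ hγ => by simpa [hcLimapp] using hγ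
  -- l2 convergence to cLim
  have hconv : ∀ ε > (0:ℝ), ∃ N, ∀ k ≥ N, l2normSq (c k - cLim) ≤ ε := by
    intro ε hε
    obtain ⟨N, hN⟩ := hl2 ε hε
    refine ⟨N, fun k hk => ?_⟩
    set S := (c k - cLim).support with hS
    have heq : l2normSq (c k - cLim) = ∑ γ ∈ S, (c k γ - f γ) ^ 2 := by
      rw [l2normSq]
      refine Finset.sum_congr rfl fun γ _ => ?_
      rw [Finsupp.sub_apply, hcLimapp]
    rw [heq]
    have hlim : Filter.Tendsto (fun j => ∑ γ ∈ S, (c k γ - c j γ) ^ 2)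
        Filter.atTop (nhds (∑ γ ∈ S, (c k γ - f γ) ^ 2)) := by
      refine tendsto_finset_sum S fun γ _ => ?_
      exact ((tendsto_const_nhds.sub (hf γ)).pow 2)
    refine le_of_tendsto hlim ?_
    filter_upwards [Filter.eventually_ge_atTop N] with j hj
    calc ∑ γ ∈ S, (c k γ - c j γ) ^ 2
        = ∑ γ ∈ S, ((c k - c j) γ) ^ 2 := by
          refine Finset.sum_congr rfl fun γ _ => by rw [Finsupp.sub_apply]
      _ ≤ l2normSq (c k - c j) := sum_sq_le_l2 _ _
      _ ≤ ε := hN k hk j hj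
  -- dictSum (c k) → dictSum cLim
  have hsupp2 : ∀ k, (c k - cLim).support.card ≤ 2 * n := by
    intro k
    calc (c k - cLim).support.card ≤ ((c k).support ∪ cLim.support).card :=
          Finset.card_le_card Finsupp.support_sub
      _ ≤ (c k).support.card + cLim.support.card := Finset.card_union_le _ _
      _ ≤ 2 * n := by have := hcard k; omega
  have htend : Filter.Tendsto (fun k => dictSum φ (c k)) Filter.atTop
      (nhds (dictSum φ cLim)) := by
    rw [Metric.tendsto_atTop]
    intro ε hε
    obtain ⟨N, hN⟩ := hconv (ε ^ 2 / 4) (by positivity)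
    refine ⟨N, fun k hk => ?_⟩
    have hub := (hRIP _ (hsupp2 k)).2
    rw [dictSum_sub] at hub
    have hl2n := l2_nonneg (c k - cLim)
    have h1 : ‖dictSum φ (c k) - dictSum φ cLim‖ ^ 2 ≤ 2 * (ε ^ 2 / 4) := by
      have := hN k hk
      nlinarith
    rw [dist_eq_norm]
    nlinarith [norm_nonneg (dictSum φ (c k) - dictSum φ cLim)]
  have hxeq : (fun k => dictSum φ (c k)) = x := funext hsum
  rw [hxeq] at htend
  exact ⟨cLim, hcLimcard, tendsto_nhds_unique htend hg⟩
end

section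
/- Let D be a normalized dictionary in a Hilbert space H. Let f ∈ H, and let (f_k) be the approximations produced by Weak Orthogonal Matching Pursuit with weakness parameter κ ∈ (0,1], residuals r_k = f - f_k, and selected index sets S_k = {γ_1,…,γ_k}. Let g = Φz with z finitely supported on a set T not contained in S_k, and let δ := δ_{#(T∪S_k)} be the RIP constant of order #(T∪S_k), assumed < 1. Then ‖r_{k+1}‖² ≤ ‖r_k‖² − (κ²(1−δ)/#(T\S_k)) · max{0, ‖r_k‖² − ‖f−g‖²}. -/
open scoped RealInnerProductSpace BigOperators

lemma dictSum_eq_linearCombination {Γ H : Type*} [NormedAddCommGroup H]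
    [InnerProductSpace ℝ H] (φ : Γ → H) (c : Γ →₀ ℝ) :
    dictSum φ c = Finsupp.linearCombination ℝ φ c :=
  (Finsupp.linearCombination_apply ℝ c).symm

set_option maxHeartbeats 1000000 in
/-- One-step residual reduction for WOMP (Zhang's lemma).
`γseq k` is the index selected at step `k+1`, `S k = {γseq 0, …, γseq (k-1)}` the set of
indices selected after `k` steps, `fk k` the orthogonal projection of `f` onto
`span {φ_γ : γ ∈ S k}` and `r k = f - fk k` the residual. -/
theorem stmt5_WOMP_one_step_reduction
    {Γ H : Type*} [Countable Γ] [DecidableEq Γ]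
    [NormedAddCommGroup H] [InnerProductSpace ℝ H] [CompleteSpace H]
    (φ : Γ → H) (hnorm : ∀ γ, ‖φ γ‖ = 1)
    (κ : ℝ) (hκ : 0 < κ) (hκ1 : κ ≤ 1)
    (f : H) (γseq : ℕ → Γ) (fk : ℕ → H)
    (S : ℕ → Finset Γ) (hS : ∀ k, S k = (Finset.range k).image γseq)
    (r : ℕ → H) (hr : ∀ k, r k = f - fk k)
    -- `fk k` is the orthogonal projection of `f` onto `F_k = span{φ_γ : γ ∈ S k}`
    (hproj_mem : ∀ k, fk k ∈ Submodule.span ℝ (φ '' (S k : Set Γ)))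
    (hproj_orth : ∀ k, ∀ v ∈ Submodule.span ℝ (φ '' (S k : Set Γ)), ⟪r k, v⟫ = 0)
    -- weak greedy selection rule
    (hselect : ∀ k, ∀ γ' : Γ, κ * |⟪r k, φ γ'⟫| ≤ |⟪r k, φ (γseq k)⟫|)
    -- `g = Φz` with `z` supported on `T`, `T` not contained in `S k`
    (k : ℕ) (z : Γ →₀ ℝ) (T : Finset Γ) (hzT : z.support ⊆ T)
    (g : H) (hg : g = dictSum φ z)
    (hTS : ¬ (T : Set Γ) ⊆ (S k : Set Γ))
    (δ : ℝ) (hδ : δ < 1) (hRIP : RIP φ (T ∪ S k).card δ) :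
    ‖r (k + 1)‖ ^ 2
      ≤ ‖r k‖ ^ 2
        - κ ^ 2 * (1 - δ) / ((T \ S k).card : ℝ)
          * max 0 (‖r k‖ ^ 2 - ‖f - g‖ ^ 2) := by
  classical
  set Λ : Finset Γ := T \ S k with hΛ
  set sel : ℝ := ⟪r k, φ (γseq k)⟫ with hseldef
  set a2 : ℝ := ‖r k‖ ^ 2 with ha2
  set b2 : ℝ := ‖f - g‖ ^ 2 with hb2
  -- Λ is nonempty
  have hΛne : Λ.Nonempty := by
    rw [Set.not_subset] at hTS
    obtain ⟨γ, hγT, hγS⟩ := hTS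
    exact ⟨γ, Finset.mem_sdiff.mpr ⟨hγT, fun h => hγS h⟩⟩
  have hNpos : (0 : ℝ) < (Λ.card : ℝ) := by
    exact_mod_cast Finset.card_pos.mpr hΛne
  -- span monotonicity
  have hFmono : Submodule.span ℝ (φ '' (S k : Set Γ))
      ≤ Submodule.span ℝ (φ '' (S (k + 1) : Set Γ)) := by
    apply Submodule.span_mono
    apply Set.image_mono
    rw [hS k, hS (k + 1)]
    exact_mod_cast Finset.image_subset_image (Finset.range_subset_range.mpr (Nat.le_succ k))
  -- step 1: ‖r (k+1)‖^2 ≤ a2 - sel^2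
  have hstep : ‖r (k + 1)‖ ^ 2 ≤ a2 - sel ^ 2 := by
    have hv : ∃ v : H, v = fk k + sel • φ (γseq k) := ⟨_, rfl⟩
    obtain ⟨v, hv⟩ := hv
    have hvmem : v ∈ Submodule.span ℝ (φ '' (S (k + 1) : Set Γ)) := by
      rw [hv]
      refine Submodule.add_mem _ (hFmono (hproj_mem k)) (Submodule.smul_mem _ _ ?_)
      apply Submodule.subset_span
      refine ⟨γseq k, ?_, rfl⟩
      rw [hS (k + 1)]
      simp only [Finset.coe_image, Set.mem_image, Finset.mem_coe, Finset.mem_range]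
      exact ⟨k, Nat.lt_succ_self k, rfl⟩
    have hfv1 : f - v = r k - sel • φ (γseq k) := by rw [hv, hr k]; abel
    have hfv2 : f - v = r (k + 1) + (fk (k + 1) - v) := by rw [hr (k + 1)]; abel
    have horth : ⟪r (k + 1), fk (k + 1) - v⟫ = 0 :=
      hproj_orth (k + 1) _ (Submodule.sub_mem _ (hproj_mem (k + 1)) hvmem)
    have h1 : ‖f - v‖ ^ 2 = a2 - sel ^ 2 := by
      rw [hfv1, norm_sub_sq_real, real_inner_smul_right, norm_smul, ← hseldef, ← ha2]
      rw [hnorm (γseq k)]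
      simp [Real.norm_eq_abs, mul_pow, sq_abs]
      ring
    have h2 : ‖r (k + 1)‖ ^ 2 ≤ ‖f - v‖ ^ 2 := by
      rw [hfv2, norm_add_sq_real, horth]
      nlinarith [sq_nonneg ‖fk (k + 1) - v‖]
    linarith [h1 ▸ h2]
  -- orthogonality of residual to selected atoms
  have hu0 : ∀ γ ∈ S k, ⟪r k, φ γ⟫ = 0 := fun γ hγ =>
    hproj_orth k _ (Submodule.subset_span ⟨γ, Finset.mem_coe.mpr hγ, rfl⟩)
  have hrfk : ⟪r k, fk k⟫ = 0 := hproj_orth k _ (hproj_mem k)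
  -- t = ⟪r k, g⟫ as a sum over Λ
  set t : ℝ := ⟪r k, g⟫ with ht
  have htsum : t = ∑ γ ∈ Λ, z γ * ⟪r k, φ γ⟫ := by
    rw [ht, hg, dictSum, Finsupp.sum, inner_sum]
    simp_rw [real_inner_smul_right]
    rw [← Finset.sum_subset (Finset.inter_subset_left (s₂ := Λ))
      (fun x hx hx' => ?_)]
    · refine Finset.sum_subset (Finset.inter_subset_right) (fun x hx hx' => ?_)
      have : z x = 0 := by
        by_contra h
        exact hx' (Finset.mem_inter.mpr ⟨Finsupp.mem_support_iff.mpr h, hx⟩)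
      rw [this, zero_mul]
    · have hxT : x ∈ T := hzT hx
      have hxS : x ∈ S k := by
        by_contra h
        exact hx' (Finset.mem_inter.mpr ⟨hx, Finset.mem_sdiff.mpr ⟨hxT, h⟩⟩)
      rw [hu0 x hxS, mul_zero]
  -- fk k = dictSum φ w with w supported on S k
  obtain ⟨w, hwsupp, hw⟩ :=
    (Finsupp.mem_span_image_iff_linearCombination ℝ).mp (hproj_mem k)
  have hwsupp' : w.support ⊆ S k := by
    rw [Finsupp.mem_supported] at hwsupp
    exact_mod_cast hwsupp
  -- RIP applied to z - w
  have hsupp : (z - w).support ⊆ T ∪ S k :=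
    Finsupp.support_sub.trans (Finset.union_subset_union hzT hwsupp')
  have hdict : dictSum φ (z - w) = g - fk k := by
    rw [dictSum_eq_linearCombination, map_sub, hg, dictSum_eq_linearCombination, hw]
  have hRIPzw := (hRIP (z - w) (Finset.card_le_card hsupp)).1
  rw [hdict] at hRIPzw
  -- Z ≤ l2normSq (z - w)
  set Z : ℝ := ∑ γ ∈ Λ, (z γ) ^ 2 with hZ
  have hZnn : 0 ≤ Z := Finset.sum_nonneg fun _ _ => sq_nonneg _
  have hZle : Z ≤ l2normSq (z - w) := by
    have h1 : Z = ∑ γ ∈ Λ, ((z - w) γ) ^ 2 := by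
      apply Finset.sum_congr rfl
      intro γ hγ
      have hγS : γ ∉ S k := (Finset.mem_sdiff.mp hγ).2
      have : w γ = 0 := by
        by_contra h
        exact hγS (hwsupp' (Finsupp.mem_support_iff.mpr h))
      rw [Finsupp.sub_apply, this, sub_zero]
    rw [h1, l2normSq]
    calc ∑ γ ∈ Λ, ((z - w) γ) ^ 2
        ≤ ∑ γ ∈ Λ ∪ (z - w).support, ((z - w) γ) ^ 2 :=
          Finset.sum_le_sum_of_subset_of_nonneg Finset.subset_union_left
            (fun _ _ _ => sq_nonneg _)
      _ = ∑ γ ∈ (z - w).support, ((z - w) γ) ^ 2 := by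
          refine (Finset.sum_subset Finset.subset_union_right (fun x _ hx => ?_)).symm
          rw [Finsupp.notMem_support_iff.mp hx]
          norm_num
  -- ‖g - fk k‖^2 = 2t - a2 + b2
  have hker : ‖g - fk k‖ ^ 2 = 2 * t - a2 + b2 := by
    have h1 : g - fk k = r k - (f - g) := by rw [hr k]; abel
    have h2 : ⟪r k, f - g⟫ = a2 - t := by
      rw [inner_sub_right, ← ht]
      have : f = r k + fk k := by rw [hr k]; abel
      rw [this, inner_add_right, hrfk, real_inner_self_eq_norm_sq, ← ha2, add_zero]
    rw [h1, norm_sub_sq_real, h2, ← ha2, ← hb2]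
    ring
  have hRIP2 : (1 - δ) * Z ≤ 2 * t - a2 + b2 := by
    calc (1 - δ) * Z ≤ (1 - δ) * l2normSq (z - w) := by
          apply mul_le_mul_of_nonneg_left hZle (by linarith)
      _ ≤ ‖g - fk k‖ ^ 2 := hRIPzw
      _ = 2 * t - a2 + b2 := hker
  -- Cauchy-Schwarz
  set U : ℝ := ∑ γ ∈ Λ, (⟪r k, φ γ⟫ : ℝ) ^ 2 with hU
  have hUnn : 0 ≤ U := Finset.sum_nonneg fun _ _ => sq_nonneg _
  have hCS : t ^ 2 ≤ Z * U := by
    rw [htsum]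
    exact Finset.sum_mul_sq_le_sq_mul_sq Λ (fun γ => z γ) (fun γ => ⟪r k, φ γ⟫)
  -- selection
  have hselU : κ ^ 2 * U ≤ (Λ.card : ℝ) * sel ^ 2 := by
    have h1 : ∀ γ ∈ Λ, κ ^ 2 * (⟪r k, φ γ⟫ : ℝ) ^ 2 ≤ sel ^ 2 := by
      intro γ _
      have h := hselect k γ
      rw [← hseldef] at h
      nlinarith [mul_le_mul h h (mul_nonneg hκ.le (abs_nonneg (⟪r k, φ γ⟫ : ℝ)))
        (abs_nonneg sel), sq_abs (⟪r k, φ γ⟫ : ℝ), sq_abs sel]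
    calc κ ^ 2 * U = ∑ γ ∈ Λ, κ ^ 2 * (⟪r k, φ γ⟫ : ℝ) ^ 2 := by
          rw [hU, Finset.mul_sum]
      _ ≤ ∑ _γ ∈ Λ, sel ^ 2 := Finset.sum_le_sum h1
      _ = (Λ.card : ℝ) * sel ^ 2 := by rw [Finset.sum_const, nsmul_eq_mul]
  -- final assembly
  rcases le_or_gt (a2 - b2) 0 with hc | hc
  · rw [max_eq_left hc, mul_zero]
    nlinarith [sq_nonneg sel]
  · rw [max_eq_right hc.le]
    have hUc : (1 - δ) * (a2 - b2) ≤ U := by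
      rcases eq_or_lt_of_le hZnn with hZ0 | hZ0
      · exfalso
        have ht0 : t = 0 := by nlinarith [sq_nonneg t]
        nlinarith
      · nlinarith [sq_nonneg (t - (a2 - b2))]
    have hkey : κ ^ 2 * (1 - δ) / ((Λ.card : ℝ)) * (a2 - b2) ≤ sel ^ 2 := by
      rw [div_mul_eq_mul_div, div_le_iff₀ hNpos]
      calc κ ^ 2 * (1 - δ) * (a2 - b2) = κ ^ 2 * ((1 - δ) * (a2 - b2)) := by ring
        _ ≤ κ ^ 2 * U := mul_le_mul_of_nonneg_left hUc (sq_nonneg κ)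
        _ ≤ (Λ.card : ℝ) * sel ^ 2 := hselU
        _ = sel ^ 2 * (Λ.card : ℝ) := mul_comm _ _
    linarith
end

section
/- Under the hypotheses of the WOMP residual reduction lemma, for the selected index γ_{k+1} one has the key estimate |⟨g, r_k⟩| ≤ κ^{-1} √(#(T\S_k)) · ‖z − c^k‖_{ℓ²} · |⟨r_k, φ_{γ_{k+1}}⟩|, where f_k = Φc^k with c^k supported on S_k. -/
open scoped RealInnerProductSpace BigOperators

/-- The ℓ² norm of a finitely supported sequence. -/
noncomputable def l2norm {Γ : Type*} (c : Γ →₀ ℝ) : ℝ :=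
  Real.sqrt (∑ γ ∈ c.support, (c γ) ^ 2)

/-- The key estimate on `⟪g, r_k⟫` in the proof of the WOMP residual-reduction lemma:
`|⟪g, r_k⟫| ≤ κ⁻¹ √(#(T \ S_k)) ‖z − c^k‖_{ℓ²} |⟪r_k, φ_{γ_{k+1}}⟫|`,
where `g = Φz` with `z` supported on `T`, `f_k = Φc^k` with `c^k` supported on `S_k`,
the residual `r_k = f − f_k` is orthogonal to `span{φ_γ : γ ∈ S_k}`, and `γsel` is the
index selected by the weak greedy rule. -/
theorem stmt6_inner_product_estimate
    {Γ H : Type*} [Countable Γ] [DecidableEq Γ]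
    [NormedAddCommGroup H] [InnerProductSpace ℝ H] [CompleteSpace H]
    (φ : Γ → H) (hnorm : ∀ γ, ‖φ γ‖ = 1)
    (κ : ℝ) (hκ : 0 < κ) (hκ1 : κ ≤ 1)
    (f : H) (Sk : Finset Γ)
    (ck : Γ →₀ ℝ) (hck : ck.support ⊆ Sk)
    (fk : H) (hfk : fk = dictSum φ ck)
    (rk : H) (hrk : rk = f - fk)
    (horth : ∀ γ ∈ Sk, ⟪rk, φ γ⟫ = 0)
    (γsel : Γ) (hselect : ∀ γ' : Γ, κ * |⟪rk, φ γ'⟫| ≤ |⟪rk, φ γsel⟫|)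
    (z : Γ →₀ ℝ) (T : Finset Γ) (hzT : z.support ⊆ T)
    (g : H) (hg : g = dictSum φ z) :
    |⟪g, rk⟫| ≤ κ⁻¹ * Real.sqrt ((T \ Sk).card) * l2norm (z - ck) * |⟪rk, φ γsel⟫| := by
  have hsel : 0 ≤ |⟪rk, φ γsel⟫| := abs_nonneg _
  have hsum : ⟪g, rk⟫ = ∑ γ ∈ T \ Sk, z γ * ⟪rk, φ γ⟫ := by
    rw [hg, dictSum, Finsupp.sum, sum_inner]
    have h1 : ∑ γ ∈ z.support, ⟪z γ • φ γ, rk⟫ = ∑ γ ∈ T, z γ * ⟪rk, φ γ⟫ := by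
      rw [Finset.sum_subset hzT]
      · exact Finset.sum_congr rfl fun γ _ => by
          rw [real_inner_smul_left, real_inner_comm]
      · intro γ _ hγ
        simp [Finsupp.notMem_support_iff.mp hγ]
    rw [h1]
    refine (Finset.sum_subset Finset.sdiff_subset ?_).symm
    intro γ hT hns
    have hγSk : γ ∈ Sk := by
      by_contra h
      exact hns (Finset.mem_sdiff.mpr ⟨hT, h⟩)
    rw [horth γ hγSk, mul_zero]
  -- step 1: Hölder
  have step1 : |⟪g, rk⟫| ≤ (∑ γ ∈ T \ Sk, |z γ|) * (κ⁻¹ * |⟪rk, φ γsel⟫|) := by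
    rw [hsum]
    calc |∑ γ ∈ T \ Sk, z γ * ⟪rk, φ γ⟫|
        ≤ ∑ γ ∈ T \ Sk, |z γ * ⟪rk, φ γ⟫| := Finset.abs_sum_le_sum_abs _ _
      _ ≤ ∑ γ ∈ T \ Sk, |z γ| * (κ⁻¹ * |⟪rk, φ γsel⟫|) := by
          refine Finset.sum_le_sum fun γ _ => ?_
          rw [abs_mul]
          refine mul_le_mul_of_nonneg_left ?_ (abs_nonneg _)
          rw [le_inv_mul_iff₀ hκ]
          exact hselect γ
      _ = (∑ γ ∈ T \ Sk, |z γ|) * (κ⁻¹ * |⟪rk, φ γsel⟫|) := by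
          rw [← Finset.sum_mul]
  -- step 2: Cauchy–Schwarz
  have step2 : ∑ γ ∈ T \ Sk, |z γ| ≤ Real.sqrt ((T \ Sk).card) * l2norm (z - ck) := by
    have hzeq : ∀ γ ∈ T \ Sk, z γ = (z - ck) γ := by
      intro γ hγ
      have : ck γ = 0 := by
        by_contra h
        exact (Finset.mem_sdiff.mp hγ).2 (hck (Finsupp.mem_support_iff.mpr h))
      simp [this]
    have key : ∑ γ ∈ T \ Sk, (z γ) ^ 2 ≤ ∑ γ ∈ (z - ck).support, ((z - ck) γ) ^ 2 := by
      calc ∑ γ ∈ T \ Sk, (z γ) ^ 2 = ∑ γ ∈ T \ Sk, ((z - ck) γ) ^ 2 :=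
            Finset.sum_congr rfl fun γ hγ => by rw [hzeq γ hγ]
        _ = ∑ γ ∈ (T \ Sk) ∩ (z - ck).support, ((z - ck) γ) ^ 2 := by
            refine (Finset.sum_subset Finset.inter_subset_left ?_).symm
            intro γ hmem hγ
            have : (z - ck) γ = 0 := by
              by_contra h
              exact hγ (Finset.mem_inter.mpr ⟨hmem, Finsupp.mem_support_iff.mpr h⟩)
            simp [this]
        _ ≤ ∑ γ ∈ (z - ck).support, ((z - ck) γ) ^ 2 :=
            Finset.sum_le_sum_of_subset_of_nonneg Finset.inter_subset_right
              (fun γ _ _ => sq_nonneg _)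
    have hcs : (∑ γ ∈ T \ Sk, |z γ|) ^ 2 ≤
        ((T \ Sk).card : ℝ) * ∑ γ ∈ (z - ck).support, ((z - ck) γ) ^ 2 := by
      calc (∑ γ ∈ T \ Sk, |z γ|) ^ 2
          ≤ ((T \ Sk).card : ℝ) * ∑ γ ∈ T \ Sk, |z γ| ^ 2 :=
            sq_sum_le_card_mul_sum_sq
        _ = ((T \ Sk).card : ℝ) * ∑ γ ∈ T \ Sk, (z γ) ^ 2 := by simp [sq_abs]
        _ ≤ ((T \ Sk).card : ℝ) * ∑ γ ∈ (z - ck).support, ((z - ck) γ) ^ 2 := by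
            exact mul_le_mul_of_nonneg_left key (by positivity)
    have h0 : (0:ℝ) ≤ ∑ γ ∈ T \ Sk, |z γ| :=
      Finset.sum_nonneg fun γ _ => abs_nonneg _
    rw [l2norm]
    rw [← Real.sqrt_mul (by positivity)]
    rw [show ((z - ck) : Γ →₀ ℝ).support = (z - ck).support from rfl]
    exact (Real.le_sqrt h0 (by positivity)).mpr hcs
  have hl2 : 0 ≤ l2norm (z - ck) := Real.sqrt_nonneg _
  calc |⟪g, rk⟫| ≤ (∑ γ ∈ T \ Sk, |z γ|) * (κ⁻¹ * |⟪rk, φ γsel⟫|) := step1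
    _ ≤ (Real.sqrt ((T \ Sk).card) * l2norm (z - ck)) * (κ⁻¹ * |⟪rk, φ γsel⟫|) := by
        refine mul_le_mul_of_nonneg_right step2 ?_
        positivity
    _ = κ⁻¹ * Real.sqrt ((T \ Sk).card) * l2norm (z - ck) * |⟪rk, φ γsel⟫| := by ring
end

section
/- Let D be a normalized dictionary in a Hilbert space H satisfying RIP((A+1)n) with constant δ_{(A+1)n} ≤ δ* < 1. Let f ∈ H and let (r_k) be the residuals of WOMP with weakness parameter κ applied to f. If g = Φz where z is supported on a set T with #T ≤ n, and j, m, L are nonnegative integers with #(T\S_j) ≤ m and j + mL ≤ An, then ‖r_{j+mL}‖² ≤ e^{−κ²(1−δ*)L} ‖r_j‖² + ‖f − g‖². -/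
open scoped RealInnerProductSpace BigOperators

set_option maxHeartbeats 1000000 in
/-- Geometric decay of WOMP residuals (Proposition 2.3): under RIP((A+1)n) with
constant `δ* < 1`, if `g = Φz` with `z` supported on `T`, `#T ≤ n`,
`#(T \ S_j) ≤ m` and `j + mL ≤ An`, then
`‖r_{j+mL}‖² ≤ e^{−κ²(1−δ*)L} ‖r_j‖² + ‖f − g‖²`. -/
theorem stmt8_WOMP_geometric_decay
    {Γ H : Type*} [Countable Γ] [DecidableEq Γ]
    [NormedAddCommGroup H] [InnerProductSpace ℝ H] [CompleteSpace H]
    (φ : Γ → H) (hnorm : ∀ γ, ‖φ γ‖ = 1)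
    (κ : ℝ) (hκ : 0 < κ) (hκ1 : κ ≤ 1)
    (f : H) (γseq : ℕ → Γ) (fk : ℕ → H)
    (S : ℕ → Finset Γ) (hS : ∀ k, S k = (Finset.range k).image γseq)
    (r : ℕ → H) (hr : ∀ k, r k = f - fk k)
    (hproj_mem : ∀ k, fk k ∈ Submodule.span ℝ (φ '' (S k : Set Γ)))
    (hproj_orth : ∀ k, ∀ v ∈ Submodule.span ℝ (φ '' (S k : Set Γ)), ⟪r k, v⟫ = 0)
    (hselect : ∀ k, ∀ γ' : Γ, κ * |⟪r k, φ γ'⟫| ≤ |⟪r k, φ (γseq k)⟫|)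
    (A n : ℕ) (δstar : ℝ) (hδ : δstar < 1)
    (hRIP : RIP φ ((A + 1) * n) δstar)
    (z : Γ →₀ ℝ) (T : Finset Γ) (hzT : z.support ⊆ T) (hT : T.card ≤ n)
    (g : H) (hg : g = dictSum φ z)
    (j m L : ℕ) (hTSj : (T \ S j).card ≤ m) (hjmL : j + m * L ≤ A * n) :
    ‖r (j + m * L)‖ ^ 2
      ≤ Real.exp (-(κ ^ 2 * (1 - δstar) * L)) * ‖r j‖ ^ 2 + ‖f - g‖ ^ 2 := by
  set e := ‖f - g‖ ^ 2 with he
  have hee : 0 ≤ e := by rw [he]; exact sq_nonneg _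
  have hdict : ∀ cξ : Γ →₀ ℝ, dictSum φ cξ = Finsupp.linearCombination ℝ φ cξ := by
    intro cξ
    rw [Finsupp.linearCombination_apply]
    rfl
  have hSmono : ∀ {k k' : ℕ}, k ≤ k' → S k ⊆ S k' := by
    intro k k' hkk
    rw [hS, hS]
    exact Finset.image_subset_image (Finset.range_subset_range.2 hkk)
  have hScard : ∀ k, (S k).card ≤ k := by
    intro k
    rw [hS]
    exact (Finset.card_image_le).trans (le_of_eq (Finset.card_range k))
  have hspanmono : ∀ {k k' : ℕ}, k ≤ k' →
      Submodule.span ℝ (φ '' (S k : Set Γ)) ≤ Submodule.span ℝ (φ '' (S k' : Set Γ)) :=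
    fun h => Submodule.span_mono (Set.image_mono (Finset.coe_subset.2 (hSmono h)))
  have hrsq : ∀ k, ⟪r k, f⟫ = ‖r k‖ ^ 2 := by
    intro k
    have h0 : ⟪r k, fk k⟫ = 0 := hproj_orth k _ (hproj_mem k)
    have h1 : f = r k + fk k := by rw [hr]; abel
    rw [h1, inner_add_right, h0, real_inner_self_eq_norm_sq, add_zero]
  have hrphi : ∀ k γ, γ ∈ S k → ⟪r k, φ γ⟫ = 0 := fun k γ hγ =>
    hproj_orth k _ (Submodule.subset_span (Set.mem_image_of_mem φ hγ))
  have hminsq : ∀ k (v : H), v ∈ Submodule.span ℝ (φ '' (S k : Set Γ)) →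
      ‖r k‖ ^ 2 ≤ ‖f - v‖ ^ 2 := by
    intro k v hv
    have h0 : ⟪r k, fk k - v⟫ = 0 :=
      hproj_orth k _ (Submodule.sub_mem _ (hproj_mem k) hv)
    have h1 : f - v = r k + (fk k - v) := by rw [hr]; abel
    rw [h1, norm_add_sq_real, h0]
    nlinarith [sq_nonneg ‖fk k - v‖]
  have hinner : ∀ (x : H) (cξ : Γ →₀ ℝ),
      ⟪x, dictSum φ cξ⟫ = ∑ γ ∈ cξ.support, cξ γ * ⟪x, φ γ⟫ := by
    intro x cξ
    rw [show dictSum φ cξ = ∑ γ ∈ cξ.support, cξ γ • φ γ from rfl, inner_sum]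
    exact Finset.sum_congr rfl fun γ _ => real_inner_smul_right _ _ _
  have hgspan : ∀ k, z.support ⊆ S k → dictSum φ z ∈ Submodule.span ℝ (φ '' (S k : Set Γ)) := by
    intro k hk
    rw [hdict]
    exact (Finsupp.mem_span_image_iff_linearCombination ℝ).2
      ⟨z, (Finsupp.mem_supported ℝ z).2 (by exact_mod_cast hk), rfl⟩
  have hcap : ∀ k, T ⊆ S k → ‖r k‖ ^ 2 ≤ e := by
    intro k hk
    have hzg : ⟪r k, g⟫ = 0 := by
      rw [hg]; exact hproj_orth k _ (hgspan k (hzT.trans hk))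
    have h1 : ‖r k‖ ^ 2 = ⟪r k, f - g⟫ := by
      rw [inner_sub_right, hrsq k, hzg, sub_zero]
    have h2 : ⟪r k, f - g⟫ ≤ ‖r k‖ * ‖f - g‖ := real_inner_le_norm _ _
    have h3 : e = ‖f - g‖ ^ 2 := he
    nlinarith [norm_nonneg (r k), norm_nonneg (f - g), sq_nonneg (‖r k‖ - ‖f - g‖)]
  have hrep : ∀ k, ∃ cc : Γ →₀ ℝ, cc.support ⊆ S k ∧ dictSum φ cc = fk k := by
    intro k
    obtain ⟨lc, hlc, hlcs⟩ :=
      (Finsupp.mem_span_image_iff_linearCombination ℝ).1 (hproj_mem k)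
    exact ⟨lc, by exact_mod_cast (Finsupp.mem_supported ℝ lc).1 hlc, by rw [hdict]; exact hlcs⟩
  -- one-step reduction
  have hstep : ∀ l : ℕ, l ≤ A * n → 0 < m → (T \ S l).card ≤ m →
      ‖r (l + 1)‖ ^ 2 ≤ ‖r l‖ ^ 2 - κ ^ 2 * (1 - δstar) / m * max 0 (‖r l‖ ^ 2 - e) := by
    intro l hlAn hmpos hTSl
    by_cases hcase : ‖r l‖ ^ 2 ≤ e
    · rw [max_eq_left (by linarith), mul_zero, sub_zero]
      have h2 := hminsq (l + 1) (fk l) (hspanmono (Nat.le_succ l) (hproj_mem l))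
      rw [← hr l] at h2
      exact h2
    · push_neg at hcase
      rw [max_eq_right (by linarith)]
      set sel := (⟪r l, φ (γseq l)⟫ : ℝ) with hseldef
      have hprojstep : ‖r (l + 1)‖ ^ 2 ≤ ‖r l‖ ^ 2 - sel ^ 2 := by
        have hγmem : γseq l ∈ S (l + 1) := by
          rw [hS]
          exact Finset.mem_image_of_mem _ (Finset.mem_range.2 (Nat.lt_succ_self l))
        have hmem : fk l + sel • φ (γseq l) ∈ Submodule.span ℝ (φ '' (S (l + 1) : Set Γ)) :=
          Submodule.add_mem _ (hspanmono (Nat.le_succ l) (hproj_mem l))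
            (Submodule.smul_mem _ _ (Submodule.subset_span (Set.mem_image_of_mem φ hγmem)))
        have h2 := hminsq (l + 1) _ hmem
        have h3 : f - (fk l + sel • φ (γseq l)) = r l - sel • φ (γseq l) := by
          rw [hr]; abel
        rw [h3, norm_sub_sq_real, real_inner_smul_right, norm_smul, hnorm,
          Real.norm_eq_abs, mul_one, sq_abs, ← hseldef] at h2
        linarith
      obtain ⟨cc, hccs, hccsum⟩ := hrep l
      set d := z - cc with hddef
      have hdz : ∀ γ, γ ∉ S l → d γ = z γ := by
        intro γ hγ
        have hccγ : cc γ = 0 := by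
          by_contra h
          exact hγ (hccs (Finsupp.mem_support_iff.2 h))
        rw [hddef, Finsupp.sub_apply, hccγ, sub_zero]
      have hdsupp : d.support ⊆ T ∪ S l :=
        Finset.Subset.trans Finsupp.support_sub (Finset.union_subset_union hzT hccs)
      have hdcard : d.support.card ≤ (A + 1) * n := by
        calc d.support.card ≤ (T ∪ S l).card := Finset.card_le_card hdsupp
          _ ≤ T.card + (S l).card := Finset.card_union_le _ _
          _ ≤ n + l := Nat.add_le_add hT (hScard l)
          _ ≤ n + A * n := Nat.add_le_add_left hlAn n
          _ = (A + 1) * n := by ring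
      have hwd : dictSum φ d = r l - (f - g) := by
        have h1 : dictSum φ d = dictSum φ z - dictSum φ cc := by
          simp only [hdict, hddef, map_sub]
        rw [h1, hccsum, ← hg, hr]; abel
      have hRIPd := (hRIP d hdcard).1
      rw [hwd] at hRIPd
      set W := ‖r l - (f - g)‖ ^ 2 with hWdef
      set P := (⟪r l, r l - (f - g)⟫ : ℝ) with hPdef
      have hPval : P = ‖r l‖ ^ 2 - ⟪r l, f - g⟫ := by
        rw [hPdef, inner_sub_right, real_inner_self_eq_norm_sq]
      have hblt : ⟪r l, f - g⟫ < ‖r l‖ ^ 2 := by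
        have hcase' : ‖f - g‖ ^ 2 < ‖r l‖ ^ 2 := by rw [← he]; exact hcase
        have hyx : ‖f - g‖ < ‖r l‖ := lt_of_pow_lt_pow_left₀ 2 (norm_nonneg _) hcase'
        have hx : 0 < ‖r l‖ := lt_of_le_of_lt (norm_nonneg _) hyx
        have hby := real_inner_le_norm (r l) (f - g)
        nlinarith
      have hPpos : 0 < P := by rw [hPval]; linarith
      have hPsum : P = ∑ γ ∈ d.support \ S l, d γ * ⟪r l, φ γ⟫ := by
        rw [hPdef, ← hwd, hinner]
        refine (Finset.sum_subset Finset.sdiff_subset ?_).symm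
        intro γ hγ hγ'
        have hγS : γ ∈ S l := by
          by_contra h
          exact hγ' (Finset.mem_sdiff.2 ⟨hγ, h⟩)
        rw [hrphi l γ hγS, mul_zero]
      have hsub2 : d.support \ S l ⊆ T \ S l := by
        intro γ hγ
        rcases Finset.mem_sdiff.1 hγ with ⟨h1, h2⟩
        exact Finset.mem_sdiff.2 ⟨(Finset.mem_union.1 (hdsupp h1)).resolve_right h2, h2⟩
      have hsum1 : P ≤ ∑ γ ∈ T \ S l, |z γ| * |⟪r l, φ γ⟫| := by
        rw [hPsum]
        calc ∑ γ ∈ d.support \ S l, d γ * ⟪r l, φ γ⟫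
            ≤ ∑ γ ∈ d.support \ S l, |z γ| * |⟪r l, φ γ⟫| := by
              refine Finset.sum_le_sum fun γ hγ => ?_
              have hγS : γ ∉ S l := (Finset.mem_sdiff.1 hγ).2
              rw [← hdz γ hγS]
              calc d γ * ⟪r l, φ γ⟫ ≤ |d γ * ⟪r l, φ γ⟫| := le_abs_self _
                _ = |d γ| * |⟪r l, φ γ⟫| := abs_mul _ _
          _ ≤ ∑ γ ∈ T \ S l, |z γ| * |⟪r l, φ γ⟫| :=
              Finset.sum_le_sum_of_subset_of_nonneg hsub2
                (fun γ _ _ => mul_nonneg (abs_nonneg _) (abs_nonneg _))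
      have hselbd : ∀ γ : Γ, |⟪r l, φ γ⟫| ≤ |sel| / κ := by
        intro γ
        rw [le_div_iff₀ hκ, mul_comm, hseldef]
        exact hselect l γ
      have hsum3 : P ≤ |sel| / κ * ∑ γ ∈ T \ S l, |z γ| := by
        calc P ≤ ∑ γ ∈ T \ S l, |z γ| * |⟪r l, φ γ⟫| := hsum1
          _ ≤ ∑ γ ∈ T \ S l, |z γ| * (|sel| / κ) :=
              Finset.sum_le_sum fun γ _ =>
                mul_le_mul_of_nonneg_left (hselbd γ) (abs_nonneg _)
          _ = |sel| / κ * ∑ γ ∈ T \ S l, |z γ| := by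
              rw [← Finset.sum_mul, mul_comm]
      have hCS : (∑ γ ∈ T \ S l, |z γ|) ^ 2
          ≤ ((T \ S l).card : ℝ) * ∑ γ ∈ T \ S l, (z γ) ^ 2 := by
        simpa using Finset.sum_mul_sq_le_sq_mul_sq (T \ S l) (fun _ => (1 : ℝ)) (fun γ => |z γ|)
      have hZnn : (0 : ℝ) ≤ ∑ γ ∈ T \ S l, (z γ) ^ 2 :=
        Finset.sum_nonneg fun γ _ => sq_nonneg _
      have hZd : ∑ γ ∈ T \ S l, (z γ) ^ 2 ≤ l2normSq d := by
        calc ∑ γ ∈ T \ S l, (z γ) ^ 2 = ∑ γ ∈ T \ S l, (d γ) ^ 2 :=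
              Finset.sum_congr rfl fun γ hγ => by rw [hdz γ (Finset.mem_sdiff.1 hγ).2]
          _ = ∑ γ ∈ (T \ S l) ∩ d.support, (d γ) ^ 2 := by
              refine (Finset.sum_subset Finset.inter_subset_left fun γ hγ hγ' => ?_).symm
              have : d γ = 0 := Finsupp.notMem_support_iff.1
                fun hmem => hγ' (Finset.mem_inter.2 ⟨hγ, hmem⟩)
              rw [this]; ring
          _ ≤ ∑ γ ∈ d.support, (d γ) ^ 2 :=
              Finset.sum_le_sum_of_subset_of_nonneg Finset.inter_subset_right
                fun γ _ _ => sq_nonneg _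
          _ = l2normSq d := rfl
      have hWZ : (1 - δstar) * (∑ γ ∈ T \ S l, (z γ) ^ 2) ≤ W :=
        le_trans (mul_le_mul_of_nonneg_left hZd (by linarith)) hRIPd
      have hWpos : 0 < W := by
        have hne : r l - (f - g) ≠ 0 := by
          intro h0
          rw [hPdef, h0, inner_zero_right] at hPpos
          exact lt_irrefl 0 hPpos
        rw [hWdef]
        exact pow_pos (norm_pos_iff.2 hne) 2
      have hPsq : P ^ 2 ≤ sel ^ 2 / κ ^ 2 *
          (((T \ S l).card : ℝ) * ∑ γ ∈ T \ S l, (z γ) ^ 2) := by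
        calc P ^ 2 ≤ (|sel| / κ * ∑ γ ∈ T \ S l, |z γ|) ^ 2 :=
              pow_le_pow_left₀ hPpos.le hsum3 2
          _ = (|sel| / κ) ^ 2 * (∑ γ ∈ T \ S l, |z γ|) ^ 2 := mul_pow _ _ 2
          _ ≤ (|sel| / κ) ^ 2 * (((T \ S l).card : ℝ) * ∑ γ ∈ T \ S l, (z γ) ^ 2) :=
              mul_le_mul_of_nonneg_left hCS (sq_nonneg _)
          _ = sel ^ 2 / κ ^ 2 * (((T \ S l).card : ℝ) * ∑ γ ∈ T \ S l, (z γ) ^ 2) := by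
              rw [div_pow, sq_abs]
      have hcardm : ((T \ S l).card : ℝ) ≤ (m : ℝ) := Nat.cast_le.2 hTSl
      have hPsq2 : P ^ 2 ≤ sel ^ 2 / κ ^ 2 * ((m : ℝ) * ∑ γ ∈ T \ S l, (z γ) ^ 2) :=
        le_trans hPsq (mul_le_mul_of_nonneg_left
          (mul_le_mul_of_nonneg_right hcardm hZnn) (by positivity))
      have hPW : (‖r l‖ ^ 2 - e) * W ≤ P ^ 2 := by
        have hWval : W = ‖r l‖ ^ 2 - 2 * ⟪r l, f - g⟫ + e := by
          rw [hWdef, norm_sub_sq_real, ← he]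
        nlinarith [sq_nonneg (⟪r l, f - g⟫ - e)]
      have h1δnn : (0 : ℝ) ≤ κ ^ 2 * (1 - δstar) :=
        mul_nonneg (sq_nonneg κ) (by linarith)
      have hbig : κ ^ 2 * (1 - δstar) * (‖r l‖ ^ 2 - e) * W ≤ (m : ℝ) * sel ^ 2 * W := by
        have c1 : κ ^ 2 * (1 - δstar) * (‖r l‖ ^ 2 - e) * W
            ≤ κ ^ 2 * (1 - δstar) * P ^ 2 := by
          have h := mul_le_mul_of_nonneg_left hPW h1δnn
          calc κ ^ 2 * (1 - δstar) * (‖r l‖ ^ 2 - e) * W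
              = κ ^ 2 * (1 - δstar) * ((‖r l‖ ^ 2 - e) * W) := by ring
            _ ≤ κ ^ 2 * (1 - δstar) * P ^ 2 := h
        have c2 : κ ^ 2 * (1 - δstar) * P ^ 2
            ≤ κ ^ 2 * (1 - δstar) * (sel ^ 2 / κ ^ 2 * ((m : ℝ) * ∑ γ ∈ T \ S l, (z γ) ^ 2)) :=
          mul_le_mul_of_nonneg_left hPsq2 h1δnn
        have hκ2 : κ ^ 2 ≠ 0 := pow_ne_zero 2 (ne_of_gt hκ)
        have c3 : κ ^ 2 * (1 - δstar) * (sel ^ 2 / κ ^ 2 * ((m : ℝ) * ∑ γ ∈ T \ S l, (z γ) ^ 2))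
            = (m : ℝ) * sel ^ 2 * ((1 - δstar) * ∑ γ ∈ T \ S l, (z γ) ^ 2) := by
          rw [show κ ^ 2 * (1 - δstar) * (sel ^ 2 / κ ^ 2 * ((m : ℝ) * ∑ γ ∈ T \ S l, (z γ) ^ 2))
            = κ ^ 2 / κ ^ 2 * ((1 - δstar) * (sel ^ 2 * ((m : ℝ) * ∑ γ ∈ T \ S l, (z γ) ^ 2))) from by ring,
            div_self hκ2]
          ring
        have c4 : (m : ℝ) * sel ^ 2 * ((1 - δstar) * ∑ γ ∈ T \ S l, (z γ) ^ 2)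
            ≤ (m : ℝ) * sel ^ 2 * W :=
          mul_le_mul_of_nonneg_left hWZ (mul_nonneg (Nat.cast_nonneg m) (sq_nonneg _))
        linarith
      have hkey : κ ^ 2 * (1 - δstar) * (‖r l‖ ^ 2 - e) ≤ (m : ℝ) * sel ^ 2 :=
        le_of_mul_le_mul_right hbig hWpos
      have hmR : (0 : ℝ) < m := Nat.cast_pos.2 hmpos
      have hkey2 : κ ^ 2 * (1 - δstar) / m * (‖r l‖ ^ 2 - e) ≤ sel ^ 2 := by
        rw [div_mul_eq_mul_div, div_le_iff₀ hmR]
        linarith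
      linarith
  -- split on m = 0
  rcases Nat.eq_zero_or_pos m with hm0 | hmpos
  · subst hm0
    have hsub : T ⊆ S j := Finset.sdiff_eq_empty_iff_subset.1
      (Finset.card_eq_zero.1 (Nat.le_antisymm hTSj (Nat.zero_le _)))
    have hc := hcap j hsub
    have hnn : 0 ≤ Real.exp (-(κ ^ 2 * (1 - δstar) * L)) * ‖r j‖ ^ 2 :=
      mul_nonneg (Real.exp_pos _).le (sq_nonneg _)
    simp only [Nat.zero_mul, Nat.add_zero]
    linarith
  · set q := max 0 (1 - κ ^ 2 * (1 - δstar) / m) with hqdef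
    have hq0 : 0 ≤ q := le_max_left _ _
    have hustep : ∀ k : ℕ, k + 1 ≤ m * L →
        max 0 (‖r (j + k + 1)‖ ^ 2 - e) ≤ q * max 0 (‖r (j + k)‖ ^ 2 - e) := by
      intro k hk
      have hlAn : j + k ≤ A * n :=
        le_trans (Nat.add_le_add_left (Nat.le_of_succ_le hk) j) hjmL
      have hTSl : (T \ S (j + k)).card ≤ m :=
        le_trans (Finset.card_le_card
          (Finset.sdiff_subset_sdiff (Finset.Subset.refl T) (hSmono (Nat.le_add_right j k)))) hTSj
      have h1 := hstep (j + k) hlAn hmpos hTSl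
      by_cases h2 : ‖r (j + k)‖ ^ 2 ≤ e
      · have hu0 : max 0 (‖r (j + k)‖ ^ 2 - e) = 0 := max_eq_left (by linarith)
        rw [hu0, mul_zero] at h1 ⊢
        rw [sub_zero] at h1
        exact max_le le_rfl (by linarith)
      · push_neg at h2
        have hmax : max 0 (‖r (j + k)‖ ^ 2 - e) = ‖r (j + k)‖ ^ 2 - e :=
          max_eq_right (by linarith)
        rw [hmax] at h1 ⊢
        have hq1 : 1 - κ ^ 2 * (1 - δstar) / m ≤ q := le_max_right _ _
        have hge : 0 ≤ ‖r (j + k)‖ ^ 2 - e := by linarith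
        have hmul := mul_le_mul_of_nonneg_right hq1 hge
        apply max_le (mul_nonneg hq0 hge)
        linarith
    have hiter : ∀ k : ℕ, k ≤ m * L →
        max 0 (‖r (j + k)‖ ^ 2 - e) ≤ q ^ k * max 0 (‖r j‖ ^ 2 - e) := by
      intro k
      induction k with
      | zero => intro _; simp
      | succ k ih =>
        intro hk
        have h1 := ih (Nat.le_of_succ_le hk)
        have h2 := hustep k hk
        have h3 : j + (k + 1) = j + k + 1 := by omega
        rw [h3]
        calc max 0 (‖r (j + k + 1)‖ ^ 2 - e) ≤ q * max 0 (‖r (j + k)‖ ^ 2 - e) := h2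
          _ ≤ q * (q ^ k * max 0 (‖r j‖ ^ 2 - e)) := mul_le_mul_of_nonneg_left h1 hq0
          _ = q ^ (k + 1) * max 0 (‖r j‖ ^ 2 - e) := by ring
    have hmne : (m : ℝ) ≠ 0 := Nat.cast_ne_zero.2 (Nat.pos_iff_ne_zero.1 hmpos)
    have hq_exp : q ≤ Real.exp (-(κ ^ 2 * (1 - δstar) / m)) := by
      apply max_le (Real.exp_pos _).le
      linarith [Real.add_one_le_exp (-(κ ^ 2 * (1 - δstar) / m))]
    have hcast : ((m * L : ℕ) : ℝ) * (-(κ ^ 2 * (1 - δstar) / m))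
        = -(κ ^ 2 * (1 - δstar) * L) := by
      push_cast
      field_simp
    have hpow : q ^ (m * L) ≤ Real.exp (-(κ ^ 2 * (1 - δstar) * L)) := by
      calc q ^ (m * L) ≤ Real.exp (-(κ ^ 2 * (1 - δstar) / m)) ^ (m * L) :=
            pow_le_pow_left₀ hq0 hq_exp _
        _ = Real.exp (((m * L : ℕ) : ℝ) * (-(κ ^ 2 * (1 - δstar) / m))) :=
            (Real.exp_nat_mul _ _).symm
        _ = Real.exp (-(κ ^ 2 * (1 - δstar) * L)) := by rw [hcast]
    have h1 := hiter (m * L) le_rfl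
    have h2 : ‖r (j + m * L)‖ ^ 2 - e ≤ max 0 (‖r (j + m * L)‖ ^ 2 - e) := le_max_right _ _
    have h3 : max 0 (‖r j‖ ^ 2 - e) ≤ ‖r j‖ ^ 2 := max_le (sq_nonneg _) (by linarith)
    have h4 : q ^ (m * L) * max 0 (‖r j‖ ^ 2 - e)
        ≤ Real.exp (-(κ ^ 2 * (1 - δstar) * L)) * ‖r j‖ ^ 2 :=
      mul_le_mul hpow h3 (le_max_left _ _) (Real.exp_pos _).le
    linarith
end

section
/- Hard-thresholding stability in ℓ²: let c, d be finitely supported sequences with #supp(c) ≤ n, and let T be a set of n indices corresponding to n largest (in absolute value) entries of d. Then ‖c − d_T‖_{ℓ²} ≤ 3 ‖c − d‖_{ℓ²}, where d_T agrees with d on T and is zero elsewhere. -/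
open scoped BigOperators

/-- Any finite sum of squares of values of a finsupp is at most the sum over the support. -/
lemma sum_sq_le_support_sum {Γ : Type*} [DecidableEq Γ] (g : Γ →₀ ℝ) (A : Finset Γ) :
    ∑ γ ∈ A, (g γ) ^ 2 ≤ ∑ γ ∈ g.support, (g γ) ^ 2 := by
  have h1 : ∑ γ ∈ A ∩ g.support, (g γ) ^ 2 = ∑ γ ∈ A, (g γ) ^ 2 := by
    refine Finset.sum_subset (Finset.inter_subset_left) ?_
    intro x hx hx'
    have : x ∉ g.support := fun h => hx' (Finset.mem_inter.2 ⟨hx, h⟩)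
    simp [Finsupp.notMem_support_iff.1 this]
  rw [← h1]
  exact Finset.sum_le_sum_of_subset_of_nonneg Finset.inter_subset_right
    (fun _ _ _ => sq_nonneg _)

/-- Hard-thresholding stability in ℓ²: if `#supp(c) ≤ n` and `T` is a set of `n`
indices of the `n` largest (in absolute value) entries of `d`, then
`‖c − d_T‖_{ℓ²} ≤ 3‖c − d‖_{ℓ²}`, where `d_T` agrees with `d` on `T` and vanishes
elsewhere. -/
theorem stmt14_hard_thresholding
    {Γ : Type*} [DecidableEq Γ]
    (n : ℕ) (c d : Γ →₀ ℝ) (hc : c.support.card ≤ n)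
    (T : Finset Γ) (hTcard : T.card = n)
    (hTlargest : ∀ γ ∈ T, ∀ γ' ∉ T, |d γ'| ≤ |d γ|) :
    l2norm (c - d.filter (· ∈ T)) ≤ 3 * l2norm (c - d) := by
  set e : Γ →₀ ℝ := c - d with he
  set f : Γ →₀ ℝ := c - d.filter (· ∈ T) with hf
  set N : ℝ := ∑ γ ∈ e.support, (e γ) ^ 2 with hN
  have hN0 : 0 ≤ N := Finset.sum_nonneg fun _ _ => sq_nonneg _
  set A : Finset Γ := c.support \ T with hA
  set B : Finset Γ := T \ c.support with hB
  -- card A ≤ card B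
  have hcardAB : A.card ≤ B.card := by
    have h1 := Finset.card_sdiff_add_card_inter c.support T
    have h2 := Finset.card_sdiff_add_card_inter T c.support
    rw [Finset.inter_comm] at h2
    rw [hA, hB]
    omega
  -- sum of d² over A ≤ sum of d² over B
  have hdAB : ∑ γ ∈ A, (d γ) ^ 2 ≤ ∑ γ ∈ B, (d γ) ^ 2 := by
    rcases A.eq_empty_or_nonempty with hAe | hAne
    · simp [hAe]
      exact Finset.sum_nonneg fun _ _ => sq_nonneg _
    · have hBne : B.Nonempty := Finset.card_pos.1 (lt_of_lt_of_le (Finset.card_pos.2 hAne) hcardAB)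
      set m : ℝ := B.inf' hBne (fun γ => (d γ) ^ 2) with hm
      have hAm : ∀ γ ∈ A, (d γ) ^ 2 ≤ m := by
        intro γ hγ
        rw [hm, Finset.le_inf'_iff]
        intro b hb
        have hbT : b ∈ T := (Finset.mem_sdiff.1 hb).1
        have hγT : γ ∉ T := (Finset.mem_sdiff.1 hγ).2
        have habs := hTlargest b hbT γ hγT
        calc (d γ) ^ 2 = |d γ| ^ 2 := (sq_abs _).symm
          _ ≤ |d b| ^ 2 := pow_le_pow_left₀ (abs_nonneg _) habs 2
          _ = (d b) ^ 2 := sq_abs _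
      have h1 : ∑ γ ∈ A, (d γ) ^ 2 ≤ A.card • m := Finset.sum_le_card_nsmul A _ m hAm
      have hm0 : 0 ≤ m := by
        obtain ⟨b, hb, hbe⟩ := Finset.exists_mem_eq_inf' hBne (fun γ => (d γ) ^ 2)
        rw [hm, hbe]; exact sq_nonneg _
      have h2 : A.card • m ≤ B.card • m := by
        simpa [nsmul_eq_mul] using mul_le_mul_of_nonneg_right
          (by exact_mod_cast Nat.cast_le.2 hcardAB : (A.card : ℝ) ≤ B.card) hm0
      have h3 : B.card • m ≤ ∑ γ ∈ B, (d γ) ^ 2 :=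
        Finset.card_nsmul_le_sum B _ m fun b hb => Finset.inf'_le _ hb
      linarith
  -- d = -e on B
  have hdB : ∑ γ ∈ B, (d γ) ^ 2 ≤ N := by
    have : ∀ γ ∈ B, (d γ) ^ 2 = (e γ) ^ 2 := by
      intro γ hγ
      have hγc : c γ = 0 := Finsupp.notMem_support_iff.1 (Finset.mem_sdiff.1 hγ).2
      simp [he, Finsupp.sub_apply, hγc]
    rw [Finset.sum_congr rfl this]
    exact sum_sq_le_support_sum e B
  -- the big set
  set U : Finset Γ := c.support ∪ d.support ∪ T with hU
  have hfU : f.support ⊆ U := by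
    refine (Finsupp.support_sub).trans ?_
    intro x hx
    rcases Finset.mem_union.1 hx with h | h
    · exact Finset.mem_union.2 (Or.inl (Finset.mem_union.2 (Or.inl h)))
    · have : x ∈ d.support := by
        rw [Finsupp.support_filter, Finset.mem_filter] at h
        exact h.1
      exact Finset.mem_union.2 (Or.inl (Finset.mem_union.2 (Or.inr this)))
  -- l2norm f squared as sum over U
  have hsumf : ∑ γ ∈ f.support, (f γ) ^ 2 = ∑ γ ∈ U, (f γ) ^ 2 := by
    refine Finset.sum_subset hfU ?_
    intro x _ hx
    simp [Finsupp.notMem_support_iff.1 hx]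
  -- split U
  have hsplit : ∑ γ ∈ U, (f γ) ^ 2 = ∑ γ ∈ U ∩ T, (f γ) ^ 2 + ∑ γ ∈ U \ T, (f γ) ^ 2 :=
    (Finset.sum_inter_add_sum_sdiff U T _).symm
  -- on U ∩ T, f = e
  have hfT : ∑ γ ∈ U ∩ T, (f γ) ^ 2 ≤ N := by
    have : ∀ γ ∈ U ∩ T, (f γ) ^ 2 = (e γ) ^ 2 := by
      intro γ hγ
      have hγT : γ ∈ T := (Finset.mem_inter.1 hγ).2
      simp [hf, he, Finsupp.sub_apply, Finsupp.filter_apply, hγT]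
    rw [Finset.sum_congr rfl this]
    exact sum_sq_le_support_sum e _
  -- on U \ T, f = c, and only A matters
  have hfc : ∑ γ ∈ U \ T, (f γ) ^ 2 = ∑ γ ∈ A, (c γ) ^ 2 := by
    have h1 : ∀ γ ∈ U \ T, (f γ) ^ 2 = (c γ) ^ 2 := by
      intro γ hγ
      have hγT : γ ∉ T := (Finset.mem_sdiff.1 hγ).2
      simp [hf, Finsupp.sub_apply, Finsupp.filter_apply, hγT]
    rw [Finset.sum_congr rfl h1]
    refine (Finset.sum_subset ?_ ?_).symm
    · intro x hx
      rcases Finset.mem_sdiff.1 hx with ⟨hxc, hxT⟩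
      exact Finset.mem_sdiff.2 ⟨Finset.mem_union.2 (Or.inl (Finset.mem_union.2 (Or.inl hxc))), hxT⟩
    · intro x hx hx'
      have : x ∉ c.support := by
        intro hxc
        exact hx' (Finset.mem_sdiff.2 ⟨hxc, (Finset.mem_sdiff.1 hx).2⟩)
      simp [Finsupp.notMem_support_iff.1 this]
  -- bound sum over A of c²
  have hAc : ∑ γ ∈ A, (c γ) ^ 2 ≤ 2 * N + 2 * ∑ γ ∈ A, (d γ) ^ 2 := by
    have h1 : ∀ γ ∈ A, (c γ) ^ 2 ≤ 2 * (e γ) ^ 2 + 2 * (d γ) ^ 2 := by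
      intro γ _
      have hce : c γ = e γ + d γ := by simp [he, Finsupp.sub_apply]
      rw [hce]
      nlinarith [sq_nonneg (e γ - d γ)]
    calc ∑ γ ∈ A, (c γ) ^ 2 ≤ ∑ γ ∈ A, (2 * (e γ) ^ 2 + 2 * (d γ) ^ 2) :=
          Finset.sum_le_sum h1
      _ = 2 * ∑ γ ∈ A, (e γ) ^ 2 + 2 * ∑ γ ∈ A, (d γ) ^ 2 := by
          rw [Finset.sum_add_distrib, Finset.mul_sum, Finset.mul_sum]
      _ ≤ 2 * N + 2 * ∑ γ ∈ A, (d γ) ^ 2 := by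
          have := sum_sq_le_support_sum e A
          linarith
  -- combine
  have hmain : ∑ γ ∈ f.support, (f γ) ^ 2 ≤ 9 * N := by
    rw [hsumf, hsplit, hfc]
    linarith
  rw [l2norm, l2norm]
  calc Real.sqrt (∑ γ ∈ f.support, (f γ) ^ 2) ≤ Real.sqrt (9 * N) :=
        Real.sqrt_le_sqrt hmain
    _ = 3 * Real.sqrt N := by
        rw [show (9 : ℝ) * N = 3 ^ 2 * N by ring, Real.sqrt_mul (by positivity),
          Real.sqrt_sq (by norm_num)]
end
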